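/- Let S be an n × n complex matrix and d: {1,…,n} → ℂ \ {0} a function with d(1) ≠ 0, such that (1/√D) S is unitary for some positive real D, and such that the maps φ_j: b_i ↦ S_{ij}/d(j) (j = 1,…,n) are the characters of a commutative semisimple ℂ-algebra A with basis {b_i} and structure constants N_{ik}^m. If the formal codegree of φ_j equals D/|d(j)|², then the Verlinde formula holds: N_{ik}^m = (1/D) Σ_j S_{ij} S_{kj} conj(S_{mj}) / d(j). -/

import Mathlib

open scoped BigOperators

/-- Abstract Verlinde formula from a unitary S-matrix. Let `S` be
an `n × n` complex matrix with `(1/√D)·S` unitary (`D > 0`), `d j ≠ 0`, such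
that `φ j : b i ↦ S i j / d j` are the (pairwise distinct, exhaustive)
characters of a commutative semisimple ℂ-algebra `A` with basis `b` and
structure constants `N`, compatible with a basis involution
(`conj (φ j (b i)) = φ j (b (inv i))`). If the formal codegree of `φ j` is
`D / |d j|²` (witnessed by elements `α j`), then
`N i k m = (1/D) ∑ j, S i j · S k j · conj (S m j) / d j`. -/
theorem stmt6 {n : ℕ} (S : Matrix (Fin n) (Fin n) ℂ) (d : Fin n → ℂ)
    (hd : ∀ j, d j ≠ 0) (D : ℝ) (hD : 0 < D)
    (hS : S * (S.map (starRingEnd ℂ)).transpose = (D : ℂ) • 1)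
    {A : Type*} [CommRing A] [Algebra ℂ A]
    (b : Fin n → A) (hb : Module.Basis (Fin n) ℂ A) (hbe : ∀ i, hb i = b i)
    (N : Fin n → Fin n → Fin n → ℂ)
    (hN : ∀ i k, b i * b k = ∑ m, N i k m • b m)
    (φ : Fin n → (A →ₐ[ℂ] ℂ)) (hφinj : Function.Injective φ)
    (hφall : ∀ ψ : A →ₐ[ℂ] ℂ, ∃ j, φ j = ψ)
    (hφS : ∀ i j, φ j (b i) = S i j / d j)
    (inv : Fin n ≃ Fin n)
    (hstar : ∀ i j, starRingEnd ℂ (φ j (b i)) = φ j (b (inv i)))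
    (α : Fin n → A)
    (hcodeg : ∀ j k, φ k (α j) =
      if j = k then (D : ℂ) / (Complex.normSq (d j) : ℂ) else 0) :
    ∀ i k m, N i k m =
      (1 / (D : ℂ)) * ∑ j, S i j * S k j * starRingEnd ℂ (S m j) / d j := by
  intro i k m
  have hDne : (D : ℂ) ≠ 0 := by exact_mod_cast hD.ne'
  have key : ∀ j, S i j * S k j / d j = ∑ m', N i k m' * S m' j := by
    intro j
    have h1 := congrArg (φ j) (hN i k)
    rw [map_mul, map_sum] at h1
    simp only [map_smul, smul_eq_mul, hφS] at h1
    have hdj := hd j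
    calc S i j * S k j / d j
        = (S i j / d j * (S k j / d j)) * d j := by field_simp
      _ = (∑ m', N i k m' * (S m' j / d j)) * d j := by rw [h1]
      _ = ∑ m', N i k m' * S m' j := by
          rw [Finset.sum_mul]
          refine Finset.sum_congr rfl fun m' _ => ?_
          field_simp
  have orth : ∀ m' m'', ∑ j, S m' j * starRingEnd ℂ (S m'' j)
      = if m' = m'' then (D : ℂ) else 0 := by
    intro m' m''
    have h2 := congrFun (congrFun hS m') m''
    rw [Matrix.mul_apply] at h2
    simp only [Matrix.transpose_apply, Matrix.map_apply, Matrix.smul_apply,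
      Matrix.one_apply, smul_eq_mul] at h2
    rw [h2]
    split <;> simp
  have hsum : ∑ j, S i j * S k j * starRingEnd ℂ (S m j) / d j = N i k m * D := by
    calc ∑ j, S i j * S k j * starRingEnd ℂ (S m j) / d j
        = ∑ j, (S i j * S k j / d j) * starRingEnd ℂ (S m j) := by
          refine Finset.sum_congr rfl fun j _ => ?_; ring
      _ = ∑ j, ∑ m', N i k m' * (S m' j * starRingEnd ℂ (S m j)) := by
          refine Finset.sum_congr rfl fun j _ => ?_
          rw [key j, Finset.sum_mul]
          exact Finset.sum_congr rfl fun m' _ => (mul_assoc _ _ _)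
      _ = ∑ m', N i k m' * ∑ j, S m' j * starRingEnd ℂ (S m j) := by
          rw [Finset.sum_comm]
          exact Finset.sum_congr rfl fun m' _ => (Finset.mul_sum _ _ _).symm
      _ = N i k m * D := by
          simp only [orth]
          rw [Finset.sum_eq_single m]
          · simp
          · intro m' _ hne; simp [hne]
          · intro h; exact absurd (Finset.mem_univ m) h
  rw [hsum]
  field_simp
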